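/- arXiv:1407.7919 — 3 statements merged into one kernel-verified Lean document; each statement's English description precedes it below -/
import Mathlib

section
/- Let λ ∈ ℝ and let r : I → ℝ³∖{0} be a solution of the Poincaré problem in ℝ³∖{0}. Then the Poincaré vector L(t) = r(t) × ṙ(t) + λ r(t)/|r(t)| is constant on I, i.e. L(s) = L(t) for all s, t ∈ I. -/
open scoped InnerProductSpace

/-- The cross product on Euclidean 3-space. -/
noncomputable def cross3 (x y : EuclideanSpace ℝ (Fin 3)) : EuclideanSpace ℝ (Fin 3) :=
  (WithLp.equiv 2 (Fin 3 → ℝ)).symm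
    ![x 1 * y 2 - x 2 * y 1, x 2 * y 0 - x 0 * y 2, x 0 * y 1 - x 1 * y 0]

lemma cross3_apply (x y : EuclideanSpace ℝ (Fin 3)) (i : Fin 3) :
    cross3 x y i =
      ![x 1 * y 2 - x 2 * y 1, x 2 * y 0 - x 0 * y 2, x 0 * y 1 - x 1 * y 0] i := rfl

lemma cross3_self (x : EuclideanSpace ℝ (Fin 3)) : cross3 x x = 0 := by
  ext i
  fin_cases i <;> simp [cross3_apply] <;> ring

lemma cross3_add_left (x x' y : EuclideanSpace ℝ (Fin 3)) :
    cross3 (x + x') y = cross3 x y + cross3 x' y := by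
  ext i
  have h : ∀ j : Fin 3, (x + x') j = x j + x' j := fun j => rfl
  fin_cases i <;> simp [cross3_apply, h] <;> ring

lemma cross3_smul_left (c : ℝ) (x y : EuclideanSpace ℝ (Fin 3)) :
    cross3 (c • x) y = c • cross3 x y := by
  ext i
  have h : ∀ j : Fin 3, (c • x) j = c * x j := fun j => rfl
  have h2 : ∀ j : Fin 3, (c • cross3 x y) j = c * cross3 x y j := fun j => rfl
  fin_cases i <;> simp [cross3_apply, h, h2] <;> ring

lemma cross3_add_right (x y y' : EuclideanSpace ℝ (Fin 3)) :
    cross3 x (y + y') = cross3 x y + cross3 x y' := by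
  ext i
  have h : ∀ j : Fin 3, (y + y') j = y j + y' j := fun j => rfl
  fin_cases i <;> simp [cross3_apply, h] <;> ring

lemma cross3_smul_right (c : ℝ) (x y : EuclideanSpace ℝ (Fin 3)) :
    cross3 x (c • y) = c • cross3 x y := by
  ext i
  have h : ∀ j : Fin 3, (c • y) j = c * y j := fun j => rfl
  have h2 : ∀ j : Fin 3, (c • cross3 x y) j = c * cross3 x y j := fun j => rfl
  fin_cases i <;> simp [cross3_apply, h, h2] <;> ring

/-- BAC-CAB identity. -/
lemma cross3_cross3 (x y : EuclideanSpace ℝ (Fin 3)) :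
    cross3 x (cross3 x y) = ⟪x, y⟫_ℝ • x - (‖x‖ ^ 2) • y := by
  have hx : ‖x‖ ^ 2 = x 0 * x 0 + x 1 * x 1 + x 2 * x 2 := by
    rw [← real_inner_self_eq_norm_sq, PiLp.inner_apply]
    simp [Fin.sum_univ_three, RCLike.inner_apply]; ring
  have hxy : ⟪x, y⟫_ℝ = x 0 * y 0 + x 1 * y 1 + x 2 * y 2 := by
    rw [PiLp.inner_apply]
    simp [Fin.sum_univ_three, RCLike.inner_apply]; ring
  ext i
  have h : ∀ (c d : ℝ) (u v : EuclideanSpace ℝ (Fin 3)) (j : Fin 3),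
      (c • u - d • v) j = c * u j - d * v j := fun _ _ _ _ _ => rfl
  fin_cases i <;> (simp [cross3_apply, h, hx, hxy]; try ring)

noncomputable def crossL : EuclideanSpace ℝ (Fin 3) →ₗ[ℝ] EuclideanSpace ℝ (Fin 3) →ₗ[ℝ]
    EuclideanSpace ℝ (Fin 3) :=
  LinearMap.mk₂ ℝ cross3 cross3_add_left cross3_smul_left cross3_add_right cross3_smul_right

noncomputable def crossCLM : EuclideanSpace ℝ (Fin 3) →L[ℝ]
    EuclideanSpace ℝ (Fin 3) →L[ℝ] EuclideanSpace ℝ (Fin 3) :=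
  LinearMap.toContinuousLinearMap
    { toFun := fun x => LinearMap.toContinuousLinearMap (crossL x)
      map_add' := by intro x y; ext z; simp [crossL]
      map_smul' := by intro c x; ext z; simp [crossL] }

lemma crossCLM_apply (x y : EuclideanSpace ℝ (Fin 3)) : crossCLM x y = cross3 x y := rfl

/-- For a solution `r` of the Poincaré problem in `ℝ³ ∖ {0}`
(`r̈ = λ (r × ṙ)/|r|³` on an open interval `I`, `r` twice continuously differentiable
and never zero on `I`), the Poincaré vector `L(t) = r(t) × ṙ(t) + λ r(t)/|r(t)|`
is constant on `I`. -/
theorem poincare_vector_constant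
    (lam : ℝ) (I : Set ℝ) (hIopen : IsOpen I) (hIconn : I.OrdConnected)
    (r r' r'' : ℝ → EuclideanSpace ℝ (Fin 3))
    (hne : ∀ t ∈ I, r t ≠ 0)
    (hd1 : ∀ t ∈ I, HasDerivAt r (r' t) t)
    (hd2 : ∀ t ∈ I, HasDerivAt r' (r'' t) t)
    (hC2 : ContinuousOn r'' I)
    (hode : ∀ t ∈ I, r'' t = (lam / ‖r t‖ ^ 3) • cross3 (r t) (r' t)) :
    ∀ s ∈ I, ∀ t ∈ I,
      cross3 (r s) (r' s) + (lam / ‖r s‖) • r s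
        = cross3 (r t) (r' t) + (lam / ‖r t‖) • r t := by
  set L : ℝ → EuclideanSpace ℝ (Fin 3) :=
    fun t => cross3 (r t) (r' t) + (lam / ‖r t‖) • r t with hLdef
  have key : ∀ t ∈ I, HasDerivAt L 0 t := by
    intro t ht
    have hrne := hne t ht
    have hn0 : ‖r t‖ ≠ 0 := norm_ne_zero_iff.mpr hrne
    have hnpos : (0:ℝ) < ‖r t‖ := norm_pos_iff.mpr hrne
    -- derivative of the norm
    have hinner : HasDerivAt (fun u => ⟪r u, r u⟫_ℝ)
        (⟪r t, r' t⟫_ℝ + ⟪r' t, r t⟫_ℝ) t := HasDerivAt.inner ℝ (hd1 t ht) (hd1 t ht)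
    have hip0 : ⟪r t, r t⟫_ℝ ≠ 0 := by
      rw [real_inner_self_eq_norm_sq]; positivity
    have hsqrt := (Real.hasDerivAt_sqrt hip0).comp t hinner
    have hnorm : HasDerivAt (fun u => ‖r u‖) (⟪r t, r' t⟫_ℝ / ‖r t‖) t := by
      have heq : (fun u => Real.sqrt ⟪r u, r u⟫_ℝ) = fun u => ‖r u‖ := by
        funext u
        rw [real_inner_self_eq_norm_sq, Real.sqrt_sq (norm_nonneg _)]
      simp only [Function.comp_def] at hsqrt
      rw [heq] at hsqrt
      refine hsqrt.congr_deriv ?_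
      rw [real_inner_self_eq_norm_sq, Real.sqrt_sq (norm_nonneg _), real_inner_comm (r' t)]
      field_simp
      ring
    -- derivative of the scalar lam / ‖r‖
    have hs : HasDerivAt (fun u => lam / ‖r u‖)
        (-(lam * ⟪r t, r' t⟫_ℝ) / ‖r t‖ ^ 3) t := by
      have := (hnorm.inv hn0).const_mul lam
      have heq : (fun u => lam * (‖r u‖)⁻¹) = fun u => lam / ‖r u‖ := by
        funext u; rw [div_eq_mul_inv]
      simp only [Pi.inv_apply, heq] at this
      refine this.congr_deriv ?_
      field_simp
    have hterm2 : HasDerivAt (fun u => (lam / ‖r u‖) • r u)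
        ((lam / ‖r t‖) • r' t + (-(lam * ⟪r t, r' t⟫_ℝ) / ‖r t‖ ^ 3) • r t) t :=
      hs.smul (hd1 t ht)
    -- derivative of the cross product term
    have hc : HasDerivAt (fun u => crossCLM (r u)) (crossCLM (r' t)) t :=
      crossCLM.hasFDerivAt.comp_hasDerivAt t (hd1 t ht)
    have hcross : HasDerivAt (fun u => cross3 (r u) (r' u))
        (cross3 (r' t) (r' t) + cross3 (r t) (r'' t)) t := by
      have := hc.clm_apply (hd2 t ht)
      simpa [crossCLM_apply] using this
    have hsum := hcross.add hterm2
    have hzero : (cross3 (r' t) (r' t) + cross3 (r t) (r'' t)) +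
        ((lam / ‖r t‖) • r' t + (-(lam * ⟪r t, r' t⟫_ℝ) / ‖r t‖ ^ 3) • r t) = 0 := by
      have e2 : lam / ‖r t‖ ^ 3 * ‖r t‖ ^ 2 = lam / ‖r t‖ := by
        field_simp
      rw [cross3_self, hode t ht, cross3_smul_right, cross3_cross3, smul_sub,
        smul_smul, smul_smul, e2]
      module
    rw [hzero] at hsum
    exact hsum
  -- constancy
  have hconv : Convex ℝ I := convex_iff_ordConnected.mpr hIconn
  intro s hs t ht
  have hdiff : DifferentiableOn ℝ L I := fun u hu =>
    (key u hu).differentiableAt.differentiableWithinAt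
  have hfd : ∀ u ∈ I, fderivWithin ℝ L I u = 0 := by
    intro u hu
    rw [fderivWithin_of_isOpen hIopen hu]
    have h0 : HasFDerivAt L (0 : ℝ →L[ℝ] EuclideanSpace ℝ (Fin 3)) u := by
      have := (key u hu).hasFDerivAt
      rwa [ContinuousLinearMap.toSpanSingleton_zero] at this
    exact h0.fderiv
  exact hconv.is_const_of_fderivWithin_eq_zero hdiff hfd hs ht
end

section
/- Let λ ∈ ℝ and let r : I → ℝ³∖{0} be a solution of the Poincaré problem in ℝ³∖{0} with Poincaré vector L. Then ⟨r(t), L(t)⟩ = λ |r(t)| for all t ∈ I; in particular, if r is non-colliding (so that L is a nonzero constant vector), the cosine of the angle between r(t) and L, namely ⟨r(t), L⟩/(|r(t)||L|) = λ/|L|, is constant, so r(I) lies on a cone with vertex at the origin directed along L. -/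
open scoped InnerProductSpace

lemma pp_inner_cross3_self (x y : EuclideanSpace ℝ (Fin 3)) : ⟪x, cross3 x y⟫_ℝ = 0 := by
  simp [cross3, PiLp.inner_apply, Fin.sum_univ_three, WithLp.equiv_symm_apply, PiLp.toLp_apply,
    RCLike.inner_apply]
  ring

lemma pp_cross3_eq_zero_collinear (x y : EuclideanSpace ℝ (Fin 3)) (hx : x ≠ 0)
    (h : cross3 x y = 0) : ∃ c : ℝ, y = c • x := by
  have h0 := congrArg (· 0) h
  have h1 := congrArg (· 1) h
  have h2 := congrArg (· 2) h
  simp [cross3, WithLp.equiv_symm_apply, PiLp.toLp_apply] at h0 h1 h2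
  have hx' : x 0 ≠ 0 ∨ x 1 ≠ 0 ∨ x 2 ≠ 0 := by
    by_contra hc
    push_neg at hc
    apply hx
    ext i
    fin_cases i <;> simp [hc.1, hc.2.1, hc.2.2]
  rcases hx' with hx0 | hx1 | hx2
  · refine ⟨y 0 / x 0, ?_⟩
    ext i
    fin_cases i <;> simp [PiLp.smul_apply] <;> field_simp <;> nlinarith [h0, h1, h2]
  · refine ⟨y 1 / x 1, ?_⟩
    ext i
    fin_cases i <;> simp [PiLp.smul_apply] <;> field_simp <;> nlinarith [h0, h1, h2]
  · refine ⟨y 2 / x 2, ?_⟩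
    ext i
    fin_cases i <;> simp [PiLp.smul_apply] <;> field_simp <;> nlinarith [h0, h1, h2]

lemma pp_norm_hasDerivAt (r : ℝ → EuclideanSpace ℝ (Fin 3)) (v : EuclideanSpace ℝ (Fin 3))
    (t : ℝ) (h : HasDerivAt r v t) (hne : r t ≠ 0) :
    HasDerivAt (fun s => ‖r s‖) (⟪r t, v⟫_ℝ / ‖r t‖) t := by
  have hg : HasDerivAt (fun s => ⟪r s, r s⟫_ℝ) (⟪r t, v⟫_ℝ + ⟪v, r t⟫_ℝ) t := h.inner ℝ h
  have hnorm : ‖r t‖ ≠ 0 := norm_ne_zero_iff.2 hne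
  have hpos : (0:ℝ) < ⟪r t, r t⟫_ℝ := by
    rw [real_inner_self_eq_norm_mul_norm]
    exact mul_pos (norm_pos_iff.2 hne) (norm_pos_iff.2 hne)
  have hsq := (Real.hasDerivAt_sqrt hpos.ne').comp t hg
  have hfun : ((fun x => Real.sqrt x) ∘ fun s => ⟪r s, r s⟫_ℝ) = fun s => ‖r s‖ := by
    funext s
    simp only [Function.comp]
    rw [real_inner_self_eq_norm_mul_norm, Real.sqrt_mul_self (norm_nonneg _)]
  rw [hfun] at hsq
  refine hsq.congr_deriv (Eq.symm ?_)
  rw [real_inner_comm v (r t)]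
  rw [show Real.sqrt ⟪r t, r t⟫_ℝ = ‖r t‖ by
    rw [real_inner_self_eq_norm_mul_norm, Real.sqrt_mul_self (norm_nonneg _)]]
  field_simp
  ring

lemma pp_L_hasDerivAt (lam : ℝ) (t : ℝ) (r r' r'' L : ℝ → EuclideanSpace ℝ (Fin 3))
    (hne : r t ≠ 0)
    (h1 : HasDerivAt r (r' t) t) (h2 : HasDerivAt r' (r'' t) t)
    (hode : r'' t = (lam / ‖r t‖ ^ 3) • cross3 (r t) (r' t))
    (hL : ∀ s, L s = cross3 (r s) (r' s) + (lam / ‖r s‖) • r s) :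
    HasDerivAt L 0 t := by
  have hnorm : ‖r t‖ ≠ 0 := norm_ne_zero_iff.2 hne
  have hri : ∀ i : Fin 3, HasDerivAt (fun s => r s i) (r' t i) t := fun i => by
    exact (EuclideanSpace.proj i (𝕜 := ℝ)).hasFDerivAt.comp_hasDerivAt t h1
  have hr'i : ∀ i : Fin 3, HasDerivAt (fun s => r' s i) (r'' t i) t := fun i => by
    exact (EuclideanSpace.proj i (𝕜 := ℝ)).hasFDerivAt.comp_hasDerivAt t h2
  have hn : HasDerivAt (fun s => ‖r s‖) (⟪r t, r' t⟫_ℝ / ‖r t‖) t :=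
    pp_norm_hasDerivAt r (r' t) t h1 hne
  have hf : HasDerivAt (fun s => lam / ‖r s‖) (-(lam * ⟪r t, r' t⟫_ℝ) / ‖r t‖ ^ 3) t := by
    have h' := (hn.inv hnorm).const_mul lam
    have heq : (fun s => lam * (‖r s‖)⁻¹) = fun s => lam / ‖r s‖ := by
      funext s; rw [div_eq_mul_inv]
    simp only [Pi.inv_apply, heq] at h'
    refine h'.congr_deriv (Eq.symm ?_)
    field_simp
  have hS : ⟪r t, r' t⟫_ℝ = r t 0 * r' t 0 + r t 1 * r' t 1 + r t 2 * r' t 2 := by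
    simp [PiLp.inner_apply, Fin.sum_univ_three, RCLike.inner_apply]
    ring
  have hn2 : r t 0 ^ 2 + r t 1 ^ 2 + r t 2 ^ 2 = ‖r t‖ ^ 2 := by
    rw [← real_inner_self_eq_norm_sq]
    simp only [PiLp.inner_apply, Fin.sum_univ_three, RCLike.inner_apply, conj_trivial]
    ring
  have hNne : r t 0 ^ 2 + r t 1 ^ 2 + r t 2 ^ 2 ≠ 0 := by
    rw [hn2]; exact pow_ne_zero 2 hnorm
  have h''0 : r'' t 0 = lam / ‖r t‖ ^ 3 * (r t 1 * r' t 2 - r t 2 * r' t 1) := by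
    rw [hode]; simp [cross3, WithLp.equiv_symm_apply, PiLp.toLp_apply]
  have h''1 : r'' t 1 = lam / ‖r t‖ ^ 3 * (r t 2 * r' t 0 - r t 0 * r' t 2) := by
    rw [hode]; simp [cross3, WithLp.equiv_symm_apply, PiLp.toLp_apply]
  have h''2 : r'' t 2 = lam / ‖r t‖ ^ 3 * (r t 0 * r' t 1 - r t 1 * r' t 0) := by
    rw [hode]; simp [cross3, WithLp.equiv_symm_apply, PiLp.toLp_apply]
  have h3 : ‖r t‖ ^ 3 = ‖r t‖ * (r t 0 ^ 2 + r t 1 ^ 2 + r t 2 ^ 2) := by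
    rw [hn2]; ring
  have hL0 : HasDerivAt (fun s => L s 0) 0 t := by
    have hfun : (fun s => L s 0) =
        fun s => (r s 1 * r' s 2 - r s 2 * r' s 1) + (lam / ‖r s‖) * r s 0 := by
      funext s; rw [hL s]; simp [cross3, WithLp.equiv_symm_apply, PiLp.toLp_apply]
    rw [hfun]
    have h := (((hri 1).mul (hr'i 2)).sub ((hri 2).mul (hr'i 1))).add (hf.mul (hri 0))
    refine h.congr_deriv (Eq.symm ?_)
    rw [h''1, h''2, hS, h3]
    field_simp
    ring
  have hL1 : HasDerivAt (fun s => L s 1) 0 t := by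
    have hfun : (fun s => L s 1) =
        fun s => (r s 2 * r' s 0 - r s 0 * r' s 2) + (lam / ‖r s‖) * r s 1 := by
      funext s; rw [hL s]; simp [cross3, WithLp.equiv_symm_apply, PiLp.toLp_apply]
    rw [hfun]
    have h := (((hri 2).mul (hr'i 0)).sub ((hri 0).mul (hr'i 2))).add (hf.mul (hri 1))
    refine h.congr_deriv (Eq.symm ?_)
    rw [h''0, h''2, hS, h3]
    field_simp
    ring
  have hL2 : HasDerivAt (fun s => L s 2) 0 t := by
    have hfun : (fun s => L s 2) =
        fun s => (r s 0 * r' s 1 - r s 1 * r' s 0) + (lam / ‖r s‖) * r s 2 := by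
      funext s; rw [hL s]; simp [cross3, WithLp.equiv_symm_apply, PiLp.toLp_apply]
    rw [hfun]
    have h := (((hri 0).mul (hr'i 1)).sub ((hri 1).mul (hr'i 0))).add (hf.mul (hri 2))
    refine h.congr_deriv (Eq.symm ?_)
    rw [h''0, h''1, hS, h3]
    field_simp
    ring
  have hLi : ∀ i : Fin 3, HasDerivAt (fun s => L s i) 0 t := by
    intro i
    fin_cases i
    · exact hL0
    · exact hL1
    · exact hL2
  have hPi : HasFDerivAt (fun s => (WithLp.equiv 2 (Fin 3 → ℝ)) (L s))
      (0 : ℝ →L[ℝ] (Fin 3 → ℝ)) t := by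
    apply hasFDerivAt_pi''
    intro i
    have h := (hLi i).hasFDerivAt
    refine h.congr_fderiv ?_
    ext x
    simp
  have hcomp := (PiLp.continuousLinearEquiv 2 ℝ
    (fun _ : Fin 3 => ℝ)).symm.hasFDerivAt.comp_hasDerivAt t hPi.hasDerivAt
  exact hcomp.congr_deriv (by simp)

/-- For a solution `r` of the Poincaré problem in `ℝ³ ∖ {0}` with
Poincaré vector `L(t) = r(t) × ṙ(t) + λ r(t)/|r(t)|`, we have `⟨r(t), L(t)⟩ = λ |r(t)|`
for all `t ∈ I`; in particular, if `r` is non-colliding, then `L` is a nonzero constant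
vector and the cosine of the angle between `r(t)` and `L`, namely
`⟨r(t), L⟩/(|r(t)||L|) = λ/|L|`, is constant, so `r(I)` lies on a cone with vertex at
the origin directed along `L`. -/
theorem poincare_inner_L_eq
    (lam : ℝ) (I : Set ℝ) (hIopen : IsOpen I) (hIconn : I.OrdConnected)
    (r r' r'' : ℝ → EuclideanSpace ℝ (Fin 3))
    (hne : ∀ t ∈ I, r t ≠ 0)
    (hd1 : ∀ t ∈ I, HasDerivAt r (r' t) t)
    (hd2 : ∀ t ∈ I, HasDerivAt r' (r'' t) t)
    (hC2 : ContinuousOn r'' I)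
    (hode : ∀ t ∈ I, r'' t = (lam / ‖r t‖ ^ 3) • cross3 (r t) (r' t))
    (L : ℝ → EuclideanSpace ℝ (Fin 3))
    (hL : ∀ t, L t = cross3 (r t) (r' t) + (lam / ‖r t‖) • r t) :
    (∀ t ∈ I, ⟪r t, L t⟫_ℝ = lam * ‖r t‖) ∧
      (¬ (∀ t ∈ I, ∃ c : ℝ, r' t = c • r t) →
        (∀ s ∈ I, ∀ t ∈ I, L s = L t) ∧
        (∀ t ∈ I, L t ≠ 0 ∧
          ⟪r t, L t⟫_ℝ / (‖r t‖ * ‖L t‖) = lam / ‖L t‖)) := by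
  have hpart1 : ∀ t ∈ I, ⟪r t, L t⟫_ℝ = lam * ‖r t‖ := by
    intro t ht
    have hnorm : ‖r t‖ ≠ 0 := norm_ne_zero_iff.2 (hne t ht)
    rw [hL t, inner_add_right, inner_smul_right, pp_inner_cross3_self,
      real_inner_self_eq_norm_mul_norm]
    field_simp
    ring
  refine ⟨hpart1, fun hnc => ?_⟩
  have hLd : ∀ t ∈ I, HasDerivAt L 0 t := fun t ht =>
    pp_L_hasDerivAt lam t r r' r'' L (hne t ht) (hd1 t ht) (hd2 t ht) (hode t ht) hL
  -- constancy of L on I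
  have hconst : ∀ s ∈ I, ∀ t ∈ I, L s = L t := by
    have key : ∀ s ∈ I, ∀ t ∈ I, s ≤ t → L t = L s := by
      intro s hs t ht hst
      have hsub : Set.Icc s t ⊆ I := hIconn.out hs ht
      have hcont : ContinuousOn L (Set.Icc s t) := fun x hx =>
        ((hLd x (hsub hx)).continuousAt).continuousWithinAt
      have hderiv : ∀ x ∈ Set.Ico s t, HasDerivWithinAt L 0 (Set.Ici x) x := fun x hx =>
        (hLd x (hsub (Set.Ico_subset_Icc_self hx))).hasDerivWithinAt
      exact constant_of_has_deriv_right_zero hcont hderiv t (Set.right_mem_Icc.2 hst)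
    intro s hs t ht
    rcases le_total s t with h | h
    · exact (key s hs t ht h).symm
    · exact key t ht s hs h
  refine ⟨hconst, fun t ht => ?_⟩
  have hnorm : ‖r t‖ ≠ 0 := norm_ne_zero_iff.2 (hne t ht)
  have hLne : L t ≠ 0 := by
    intro h0
    push_neg at hnc
    obtain ⟨t₀, ht₀, hcol⟩ := hnc
    have hL0 : L t₀ = 0 := by rw [hconst t₀ ht₀ t ht, h0]
    have hnorm0 : ‖r t₀‖ ≠ 0 := norm_ne_zero_iff.2 (hne t₀ ht₀)
    have hlam : lam = 0 := by
      have := hpart1 t₀ ht₀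
      rw [hL0, inner_zero_right] at this
      rcases mul_eq_zero.1 this.symm with h | h
      · exact h
      · exact absurd h hnorm0
    have hcr : cross3 (r t₀) (r' t₀) = 0 := by
      have := hL t₀
      rw [hL0, hlam] at this
      simpa using this.symm
    obtain ⟨c, hc⟩ := pp_cross3_eq_zero_collinear (r t₀) (r' t₀) (hne t₀ ht₀) hcr
    exact hcol c hc
  refine ⟨hLne, ?_⟩
  rw [hpart1 t ht]
  have hLn : ‖L t‖ ≠ 0 := norm_ne_zero_iff.2 hLne
  field_simp
end

section
/- Let r₀ > 0, v₀ > 0, λ > 0 and set ψ = arctan(r₀ v₀/λ) ∈ (0, π/2). Define r : ℝ → ℝ³ by r(t) = √(r₀² + v₀² t²) · (sin ψ · cos(arctan(v₀ t/r₀)/sin ψ), sin ψ · sin(arctan(v₀ t/r₀)/sin ψ), cos ψ). Then r(t) ≠ 0 for all t, r is twice continuously differentiable, r satisfies r̈(t) = λ (r(t) × ṙ(t))/|r(t)|³ for all t ∈ ℝ, and moreover |r(0)| = r₀ and |ṙ(0)| = v₀. -/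
open scoped InnerProductSpace
open Real

set_option maxHeartbeats 1000000 in
/-- For `r₀, v₀, λ > 0` and `ψ = arctan(r₀ v₀ / λ)`, the explicit curve
`r(t) = √(r₀² + v₀² t²) · (sin ψ cos(arctan(v₀ t/r₀)/sin ψ), sin ψ sin(arctan(v₀ t/r₀)/sin ψ), cos ψ)`
never vanishes, is twice continuously differentiable, solves the Poincaré problem
`r̈ = λ (r × ṙ)/|r|³` on all of `ℝ`, and satisfies `|r(0)| = r₀` and `|ṙ(0)| = v₀`. -/
theorem poincare_explicit_solution
    (r₀ v₀ lam : ℝ) (hr₀ : 0 < r₀) (hv₀ : 0 < v₀) (hlam : 0 < lam)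
    (ψ : ℝ) (hψ : ψ = arctan (r₀ * v₀ / lam))
    (r : ℝ → EuclideanSpace ℝ (Fin 3))
    (hr : ∀ t, r t = Real.sqrt (r₀ ^ 2 + v₀ ^ 2 * t ^ 2) •
      (WithLp.equiv 2 (Fin 3 → ℝ)).symm
        ![sin ψ * cos (arctan (v₀ * t / r₀) / sin ψ),
          sin ψ * sin (arctan (v₀ * t / r₀) / sin ψ),
          cos ψ]) :
    (∀ t, r t ≠ 0) ∧
    ContDiff ℝ 2 r ∧
    (∀ t, deriv (deriv r) t = (lam / ‖r t‖ ^ 3) • cross3 (r t) (deriv r t)) ∧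
    ‖r 0‖ = r₀ ∧ ‖deriv r 0‖ = v₀ := by
  have hqpos : ∀ t : ℝ, (0:ℝ) < r₀^2 + v₀^2*t^2 := fun t => by positivity
  set s : ℝ := sin ψ with hsdef
  set c : ℝ := cos ψ with hcdef
  have hs : 0 < s := by
    rw [hsdef, hψ, sin_arctan]; positivity
  have hc : 0 < c := by
    rw [hcdef, hψ]; exact cos_arctan_pos _
  have hsc : s^2 + c^2 = 1 := sin_sq_add_cos_sq ψ
  have hlams : lam * s = r₀ * v₀ * c := by
    have h1 : sin ψ = (r₀*v₀/lam) / Real.sqrt (1 + (r₀*v₀/lam)^2) := by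
      rw [hψ, sin_arctan]
    have h2 : cos ψ = 1 / Real.sqrt (1 + (r₀*v₀/lam)^2) := by
      rw [hψ, cos_arctan]
    rw [hsdef, hcdef, h1, h2]
    field_simp
  set ρ : ℝ → ℝ := fun t => Real.sqrt (r₀^2 + v₀^2*t^2) with hρdef
  have hρpos : ∀ t, 0 < ρ t := fun t => Real.sqrt_pos.mpr (hqpos t)
  have hρsq : ∀ t, ρ t ^ 2 = r₀^2 + v₀^2*t^2 := fun t => Real.sq_sqrt (hqpos t).le
  set θ : ℝ → ℝ := fun t => arctan (v₀*t/r₀)/s with hθdef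
  -- component functions
  set X : ℝ → ℝ := fun t => ρ t * (s * cos (θ t)) with hXdef
  set Y : ℝ → ℝ := fun t => ρ t * (s * sin (θ t)) with hYdef
  set Z : ℝ → ℝ := fun t => ρ t * c with hZdef
  have hr' : r = fun t => (WithLp.equiv 2 (Fin 3 → ℝ)).symm ![X t, Y t, Z t] := by
    funext t
    rw [hr]
    ext i
    fin_cases i <;>
      simp [PiLp.smul_apply, WithLp.equiv_symm_apply, PiLp.toLp_apply, smul_eq_mul, hXdef, hYdef, hZdef,
        hθdef, mul_comm, mul_div_assoc, hρdef]
  -- derivatives of building blocks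
  have hρd : ∀ t, HasDerivAt ρ (v₀^2*t/ρ t) t := by
    intro t
    have hb : HasDerivAt (fun u : ℝ => r₀^2 + v₀^2*u^2) (2*(v₀^2*t)) t := by
      simpa [mul_comm, mul_assoc, mul_left_comm] using
        (((hasDerivAt_pow 2 t).const_mul (v₀^2)).const_add (r₀^2))
    have := hb.sqrt (hqpos t).ne'
    convert this using 1
    rw [hρdef]
    field_simp
  have hθd : ∀ t, HasDerivAt θ (v₀*r₀/(s*ρ t^2)) t := by
    intro t
    have hb : HasDerivAt (fun u : ℝ => v₀*u/r₀) (v₀/r₀) t := by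
      simpa using ((hasDerivAt_id t).const_mul v₀).div_const r₀
    have := (hb.arctan).div_const s
    refine this.congr_deriv ?_; symm
    rw [hρsq t]
    field_simp
  set A : ℝ → ℝ := fun t => v₀^2*t/ρ t with hAdef
  set B : ℝ → ℝ := fun t => v₀*r₀/ρ t with hBdef
  have hAd : ∀ t, HasDerivAt A (v₀^2*r₀^2/ρ t^3) t := by
    intro t
    have hb : HasDerivAt (fun u : ℝ => v₀^2*u) (v₀^2) t := by
      simpa using (hasDerivAt_id t).const_mul (v₀^2)
    have := hb.div (hρd t) (hρpos t).ne'
    refine this.congr_deriv ?_; symm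
    have h2 := hρsq t
    have h0 := (hρpos t).ne'
    field_simp
    linear_combination (-1 : ℝ) * h2
  have hBd : ∀ t, HasDerivAt B (-(v₀^3*r₀*t/ρ t^3)) t := by
    intro t
    have := (hasDerivAt_const t (v₀*r₀)).div (hρd t) (hρpos t).ne'
    refine this.congr_deriv ?_; symm
    field_simp
    ring
  set X' : ℝ → ℝ := fun t => s * A t * cos (θ t) - B t * sin (θ t) with hX'def
  set Y' : ℝ → ℝ := fun t => s * A t * sin (θ t) + B t * cos (θ t) with hY'def
  set Z' : ℝ → ℝ := fun t => A t * c with hZ'def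
  have hXd : ∀ t, HasDerivAt X (X' t) t := by
    intro t
    have := (hρd t).mul (((hθd t).cos).const_mul s)
    refine this.congr_deriv ?_; symm
    rw [hX'def, hAdef, hBdef]
    have h0 := (hρpos t).ne'
    field_simp
    ring
  have hYd : ∀ t, HasDerivAt Y (Y' t) t := by
    intro t
    have := (hρd t).mul (((hθd t).sin).const_mul s)
    refine this.congr_deriv ?_; symm
    rw [hY'def, hAdef, hBdef]
    have h0 := (hρpos t).ne'
    field_simp
  have hZd : ∀ t, HasDerivAt Z (Z' t) t := by
    intro t
    exact (hρd t).mul_const c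
  set X'' : ℝ → ℝ := fun t => -(v₀^2*r₀^2*c^2/(s*ρ t^3)) * cos (θ t) with hX''def
  set Y'' : ℝ → ℝ := fun t => -(v₀^2*r₀^2*c^2/(s*ρ t^3)) * sin (θ t) with hY''def
  set Z'' : ℝ → ℝ := fun t => v₀^2*r₀^2/ρ t^3 * c with hZ''def
  have hXd2 : ∀ t, HasDerivAt X' (X'' t) t := by
    intro t
    have := (((hAd t).const_mul s).mul ((hθd t).cos)).sub ((hBd t).mul ((hθd t).sin))
    refine this.congr_deriv ?_; symm
    rw [hX''def, hAdef, hBdef]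
    have h0 := (hρpos t).ne'
    have h1 := hs.ne'
    field_simp
    linear_combination (-(r₀ * cos (θ t))) * hsc
  have hYd2 : ∀ t, HasDerivAt Y' (Y'' t) t := by
    intro t
    have := (((hAd t).const_mul s).mul ((hθd t).sin)).add ((hBd t).mul ((hθd t).cos))
    refine this.congr_deriv ?_; symm
    rw [hY''def, hAdef, hBdef]
    have h0 := (hρpos t).ne'
    have h1 := hs.ne'
    field_simp
    linear_combination (-(r₀ * sin (θ t))) * hsc
  have hZd2 : ∀ t, HasDerivAt Z' (Z'' t) t := by
    intro t
    exact (hAd t).mul_const c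
  have hvec : ∀ (f g h : ℝ → ℝ) (vf vg vh t : ℝ), HasDerivAt f vf t → HasDerivAt g vg t →
      HasDerivAt h vh t →
      HasDerivAt (fun u => (WithLp.equiv 2 (Fin 3 → ℝ)).symm ![f u, g u, h u])
        ((WithLp.equiv 2 (Fin 3 → ℝ)).symm ![vf, vg, vh]) t := by
    intro f g h vf vg vh t hf hg hh
    have hF : HasDerivAt (fun u => (![f u, g u, h u] : Fin 3 → ℝ)) ![vf, vg, vh] t := by
      rw [hasDerivAt_pi]
      intro i
      fin_cases i
      · simpa using hf
      · simpa using hg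
      · simpa using hh
    exact ((PiLp.continuousLinearEquiv 2 ℝ (fun _ : Fin 3 => ℝ)).symm.hasFDerivAt.comp_hasDerivAt
      t hF)
  have hrd : ∀ t, HasDerivAt r ((WithLp.equiv 2 (Fin 3 → ℝ)).symm ![X' t, Y' t, Z' t]) t := by
    intro t; rw [hr']; exact hvec X Y Z _ _ _ t (hXd t) (hYd t) (hZd t)
  have hderiv1 : deriv r = fun t => (WithLp.equiv 2 (Fin 3 → ℝ)).symm ![X' t, Y' t, Z' t] :=
    funext fun t => (hrd t).deriv
  have hrd2 : ∀ t, deriv (deriv r) t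
      = (WithLp.equiv 2 (Fin 3 → ℝ)).symm ![X'' t, Y'' t, Z'' t] := by
    intro t; rw [hderiv1]
    exact (hvec X' Y' Z' _ _ _ t (hXd2 t) (hYd2 t) (hZd2 t)).deriv
  have hnorm : ∀ t, ‖r t‖ = ρ t := by
    intro t
    rw [hr', EuclideanSpace.norm_eq]
    have hsum : ∑ i, ‖((WithLp.equiv 2 (Fin 3 → ℝ)).symm ![X t, Y t, Z t] :
        EuclideanSpace ℝ (Fin 3)) i‖^2 = ρ t^2 := by
      simp only [Fin.sum_univ_three, WithLp.equiv_symm_apply, PiLp.toLp_apply, Real.norm_eq_abs, sq_abs,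
        Matrix.cons_val_zero, Matrix.cons_val_one, Matrix.head_cons, Matrix.cons_val_two,
        Matrix.tail_cons, hXdef, hYdef, hZdef]
      linear_combination (ρ t^2*s^2) * sin_sq_add_cos_sq (θ t) + (ρ t^2) * hsc
    rw [hsum, Real.sqrt_sq (hρpos t).le]
  refine ⟨?_, ?_, ?_, ?_, ?_⟩
  · intro t h
    have h2 := hnorm t
    rw [h, norm_zero] at h2
    exact (hρpos t).ne h2
  · -- ContDiff
    rw [hr']
    have hqc : ContDiff ℝ 2 (fun t : ℝ => r₀^2 + v₀^2*t^2) := by fun_prop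
    have hρc : ContDiff ℝ 2 ρ := by
      rw [hρdef, contDiff_iff_contDiffAt]
      intro t
      exact (Real.contDiffAt_sqrt (hqpos t).ne').comp t hqc.contDiffAt
    have hθc : ContDiff ℝ 2 θ := by
      rw [hθdef]
      have hlin : ContDiff ℝ 2 (fun t : ℝ => v₀ * t / r₀) := by
        apply ContDiff.div_const
        fun_prop
      exact (Real.contDiff_arctan.comp hlin).div_const s
    have hXc : ContDiff ℝ 2 X := by
      rw [hXdef]
      exact hρc.mul (contDiff_const.mul (Real.contDiff_cos.comp hθc))
    have hYc : ContDiff ℝ 2 Y := by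
      rw [hYdef]
      exact hρc.mul (contDiff_const.mul (Real.contDiff_sin.comp hθc))
    have hZc : ContDiff ℝ 2 Z := by
      rw [hZdef]
      exact hρc.mul contDiff_const
    have hF : ContDiff ℝ 2 (fun t => (![X t, Y t, Z t] : Fin 3 → ℝ)) := by
      apply contDiff_pi.mpr
      intro i
      fin_cases i
      · simpa using hXc
      · simpa using hYc
      · simpa using hZc
    exact (((PiLp.continuousLinearEquiv 2 ℝ (fun _ : Fin 3 => ℝ)).symm :
      (Fin 3 → ℝ) →L[ℝ] EuclideanSpace ℝ (Fin 3)).contDiff).comp hF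
  · -- ODE
    intro t
    rw [hrd2 t, hderiv1, hnorm t, hr', cross3]
    ext i
    have h0 := (hρpos t).ne'
    have h1 := hs.ne'
    fin_cases i <;>
      simp only [WithLp.equiv_symm_apply, PiLp.toLp_apply, PiLp.smul_apply, smul_eq_mul,
        Matrix.cons_val_zero, Matrix.cons_val_one, Matrix.head_cons, Matrix.cons_val_two,
        Matrix.tail_cons, Fin.isValue, hXdef, hYdef, hZdef, hX'def, hY'def, hZ'def,
        hX''def, hY''def, hZ''def, hAdef, hBdef, Fin.zero_eta, Fin.mk_one, Fin.reduceFinMk]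
    · field_simp
      linear_combination (r₀ * cos (θ t)) * hlams
    · field_simp
      linear_combination (r₀ * sin (θ t)) * hlams
    · field_simp
      linear_combination (-r₀) * hlams + (-(r₀*lam*s)) * sin_sq_add_cos_sq (θ t)
  · rw [hnorm 0, hρdef]
    simp [Real.sqrt_sq hr₀.le]
  · rw [hderiv1]
    have hρ0 : ρ 0 = r₀ := by rw [hρdef]; simp [Real.sqrt_sq hr₀.le]
    have hθ0 : θ 0 = 0 := by rw [hθdef]; simp
    rw [EuclideanSpace.norm_eq]
    have hsum : ∑ i, ‖((WithLp.equiv 2 (Fin 3 → ℝ)).symm ![X' 0, Y' 0, Z' 0] :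
        EuclideanSpace ℝ (Fin 3)) i‖^2 = v₀^2 := by
      simp [Fin.sum_univ_three, WithLp.equiv_symm_apply, PiLp.toLp_apply, Real.norm_eq_abs, sq_abs,
        hX'def, hY'def, hZ'def, hAdef, hBdef, hθ0, hρ0]
      field_simp
    rw [hsum, Real.sqrt_sq hv₀.le]
end
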